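/- Let J, R be n×n complex matrices with J skew-Hermitian, R Hermitian positive semi-definite, and suppose no eigenvector of J lies in the kernel of R. Then every eigenvalue of J - R has strictly negative real part. -/

import Mathlib

open Matrix
open scoped ComplexOrder

/-- If no eigenvector of `J` lies in the kernel of `R`, then every eigenvalue of
`J - R` has strictly negative real part (negative hypocoercivity). -/
theorem stmt_7 (n : ℕ) (J R : Matrix (Fin n) (Fin n) ℂ)
    (hJ : Jᴴ = -J) (hR : R.PosSemidef)
    (h : ∀ (mu : ℂ) (v : Fin n → ℂ), v ≠ 0 → J *ᵥ v = mu • v → R *ᵥ v ≠ 0) :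
    ∀ (lam : ℂ) (v : Fin n → ℂ), v ≠ 0 → (J - R) *ᵥ v = lam • v → lam.re < 0 := by
  intro lam v hv hev
  set a := star v ⬝ᵥ (J *ᵥ v) with ha
  set b := star v ⬝ᵥ (R *ᵥ v) with hb
  set c := star v ⬝ᵥ v with hc
  -- c is a positive real
  have hc0 : 0 ≤ c := dotProduct_star_self_nonneg v
  have hcne : c ≠ 0 := fun h0 => hv (dotProduct_star_self_eq_zero.mp h0)
  have hcre : 0 < c.re := by
    rcases (Complex.le_def.mp hc0) with ⟨h1, h2⟩
    simp at h1 h2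
    rcases lt_or_eq_of_le h1 with h3 | h3
    · exact h3
    · exact absurd (Complex.ext h3.symm h2.symm) hcne
  have hcim : c.im = 0 := by
    rcases (Complex.le_def.mp hc0) with ⟨_, h2⟩
    simpa using h2.symm
  -- b is a nonneg real
  have hb0 : 0 ≤ b := hR.dotProduct_mulVec_nonneg v
  have hbre : 0 ≤ b.re := by simpa using (Complex.le_def.mp hb0).1
  have hbim : b.im = 0 := by simpa using (Complex.le_def.mp hb0).2.symm
  -- a is purely imaginary
  have hstar : star a = -a := by
    rw [ha, ← star_dotProduct, star_mulVec, hJ, dotProduct_mulVec, vecMul_neg, neg_dotProduct]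
  have hare : a.re = 0 := by
    have := congrArg Complex.re hstar
    simp [Complex.neg_re] at this
    linarith
  -- main identity
  have key : a - b = lam * c := by
    have := congrArg (fun w => star v ⬝ᵥ w) hev
    simpa [sub_mulVec, dotProduct_sub, dotProduct_smul, smul_eq_mul, ha, hb, hc] using this
  have keyre : -b.re = lam.re * c.re := by
    have := congrArg Complex.re key
    simp [Complex.sub_re, Complex.mul_re, hare, hcim] at this
    linarith
  -- lam.re ≤ 0
  have hle : lam.re ≤ 0 := by nlinarith
  rcases lt_or_eq_of_le hle with h1 | h1
  · exact h1
  -- if lam.re = 0 then b = 0, so Rv = 0, contradiction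
  exfalso
  have hbre0 : b.re = 0 := by nlinarith
  have hbz : b = 0 := Complex.ext hbre0 hbim
  have hRv : R *ᵥ v = 0 := (hR.dotProduct_mulVec_zero_iff v).mp hbz
  have hJv : J *ᵥ v = lam • v := by
    have : (J - R) *ᵥ v = J *ᵥ v - R *ᵥ v := sub_mulVec J R v
    rw [this, hRv, sub_zero] at hev
    exact hev
  exact h lam v hv hJv hRv
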